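/- For every real β > 1 and every positive integer n, the von Mangoldt function satisfies the integral representation Λ(n) = n^β ∫_{𝕋^ω} (∑_{m=1}^∞ m^{−β} (log m) t^{α(m)}) / (∑_{m=1}^∞ m^{−β} t^{α(m)}) · t^{-α(n)} dt. -/

import Mathlib

open MeasureTheory Filter Finset

noncomputable section

instance : MeasurableSpace Circle := borel Circle
instance : BorelSpace Circle := ⟨rfl⟩

/-- The infinite-dimensional torus `𝕋^ω`, a countable product of unit circles. -/
abbrev Torus : Type := ℕ → Circle

/-- `pprime j` is the `j`-th prime (`0`-indexed, so `pprime 0 = 2`). -/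
def pprime (j : ℕ) : ℕ := Nat.nth Nat.Prime j

/-- `expOf n j` is `α_j(n)`, the exponent of the `j`-th prime in the factorization of `n`. -/
def expOf (n j : ℕ) : ℕ := n.factorization (pprime j)

/-- `tpow t n = t^{α(n)} = ∏_j t_j^{α_j(n)}`, a finite product. -/
def tpow (t : Torus) (n : ℕ) : ℂ := ∏ᶠ j, ((t j : ℂ) ^ expOf n j)

namespace VMaux

open Complex LSeries
open scoped LSeries.notation

lemma expOf_ne_zero_lt {n j : ℕ} (h : expOf n j ≠ 0) : j < n + 1 := by
  have hmem : pprime j ∈ n.primeFactors := by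
    rw [← Nat.support_factorization]; exact Finsupp.mem_support_iff.mpr h
  obtain ⟨hp, hdvd, hn0⟩ := Nat.mem_primeFactors.mp hmem
  have hle : pprime j ≤ n := Nat.le_of_dvd (Nat.pos_of_ne_zero hn0) hdvd
  have hj : j ≤ pprime j :=
    (Nat.nth_strictMono Nat.infinite_setOf_prime).le_apply
  omega

lemma mulSupport_subset (t : Torus) (n : ℕ) :
    (Function.mulSupport fun j => ((t j : ℂ) ^ expOf n j)) ⊆ ↑(Finset.range (n + 1)) := by
  intro j hj
  have : expOf n j ≠ 0 := by
    intro h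
    apply hj
    simp [h]
  simpa using expOf_ne_zero_lt this

lemma mulSupport_finite (t : Torus) (n : ℕ) :
    (Function.mulSupport fun j => ((t j : ℂ) ^ expOf n j)).Finite :=
  Set.Finite.subset (Finset.range (n + 1)).finite_toSet (mulSupport_subset t n)

lemma tpow_eq_prod (t : Torus) (n : ℕ) :
    tpow t n = ∏ j ∈ Finset.range (n + 1), ((t j : ℂ) ^ expOf n j) :=
  finprod_eq_prod_of_mulSupport_subset _ (mulSupport_subset t n)

lemma norm_tpow (t : Torus) (n : ℕ) : ‖tpow t n‖ = 1 := by
  rw [tpow_eq_prod, norm_prod]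
  refine Finset.prod_eq_one fun j _ => ?_
  rw [norm_pow]
  rw [Circle.norm_coe, one_pow]

lemma tpow_ne_zero (t : Torus) (n : ℕ) : tpow t n ≠ 0 := by
  intro h
  have := norm_tpow t n
  rw [h] at this
  simp at this

lemma tpow_one (t : Torus) : tpow t 1 = 1 := by
  simp [tpow, expOf]

lemma tpow_mul (t : Torus) {a b : ℕ} (ha : a ≠ 0) (hb : b ≠ 0) :
    tpow t (a * b) = tpow t a * tpow t b := by
  rw [tpow, tpow, tpow, ← finprod_mul_distrib (mulSupport_finite t a) (mulSupport_finite t b)]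
  refine finprod_congr fun j => ?_
  rw [← pow_add]
  congr 1
  simp [expOf, Nat.factorization_mul ha hb]

lemma tpow_mul_point (g t : Torus) (n : ℕ) : tpow (g * t) n = tpow g n * tpow t n := by
  rw [tpow, tpow, tpow, ← finprod_mul_distrib (mulSupport_finite g n) (mulSupport_finite t n)]
  refine finprod_congr fun j => ?_
  rw [← mul_pow]
  rfl

lemma continuous_tpow (n : ℕ) : Continuous fun t : Torus => tpow t n := by
  simp only [tpow_eq_prod]
  exact continuous_finset_prod _ fun j _ =>
    (continuous_subtype_val.comp (continuous_apply j)).pow _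

lemma integral_tpow (ν : Measure Torus) [ν.IsHaarMeasure] [IsProbabilityMeasure ν]
    {m n : ℕ} (hm : m ≠ 0) (hn : n ≠ 0) :
    ∫ t : Torus, tpow t m * (tpow t n)⁻¹ ∂ν = if m = n then 1 else 0 := by
  rcases eq_or_ne m n with rfl | hne
  · rw [if_pos rfl]
    have h1 : ∀ t : Torus, tpow t m * (tpow t m)⁻¹ = 1 := fun t =>
      mul_inv_cancel₀ (tpow_ne_zero t m)
    simp only [h1]
    simp
  · rw [if_neg hne]
    -- find an index where the exponents differ
    obtain ⟨p, hp⟩ : ∃ p, m.factorization p ≠ n.factorization p := by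
      by_contra h
      push_neg at h
      exact hne (Nat.factorization_inj hm hn (Finsupp.ext h))
    have hpp : p.Prime := by
      by_contra hc
      exact hp (by rw [Nat.factorization_eq_zero_of_not_prime _ hc,
        Nat.factorization_eq_zero_of_not_prime _ hc])
    set j := Nat.count Nat.Prime p with hjdef
    have hpj : pprime j = p := Nat.nth_count hpp
    have hexp : expOf m j ≠ expOf n j := by
      simpa [expOf, hpj] using hp
    set k : ℝ := (expOf m j : ℝ) - (expOf n j : ℝ) with hk
    have hk0 : k ≠ 0 := sub_ne_zero.mpr (by exact_mod_cast hexp)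
    set z : Circle := Circle.exp (Real.pi / k) with hz
    set g : Torus := Function.update (1 : Torus) j z with hg
    have hcg : ∀ N : ℕ, tpow g N = (z : ℂ) ^ expOf N j := by
      intro N
      rw [tpow]
      rw [finprod_eq_single (fun i => ((g i : ℂ) ^ expOf N i)) j
        (fun i hi => by rw [hg, Function.update_of_ne hi, Pi.one_apply, Circle.coe_one, one_pow])]
      rw [hg]
      simp
    have hval : tpow g m * (tpow g n)⁻¹ = -1 := by
      rw [hcg, hcg, hz, Circle.coe_exp, ← Complex.exp_nat_mul, ← Complex.exp_nat_mul,
        ← Complex.exp_neg, ← Complex.exp_add]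
      rw [show (expOf m j : ℂ) * (↑(Real.pi / k) * Complex.I) +
          -((expOf n j : ℂ) * (↑(Real.pi / k) * Complex.I)) =
          (((expOf m j : ℝ) - (expOf n j : ℝ)) * (Real.pi / k) : ℝ) * Complex.I by
        push_cast; ring]
      rw [show ((expOf m j : ℝ) - (expOf n j : ℝ)) * (Real.pi / k) = Real.pi by
        rw [← hk]; field_simp]
      exact Complex.exp_pi_mul_I
    have hmul : ∀ t : Torus, tpow (g * t) m * (tpow (g * t) n)⁻¹ =
        -(tpow t m * (tpow t n)⁻¹) := by
      intro t
      rw [tpow_mul_point, tpow_mul_point, mul_inv]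
      calc tpow g m * tpow t m * ((tpow g n)⁻¹ * (tpow t n)⁻¹)
          = (tpow g m * (tpow g n)⁻¹) * (tpow t m * (tpow t n)⁻¹) := by ring
        _ = -(tpow t m * (tpow t n)⁻¹) := by rw [hval]; ring
    have key := integral_mul_left_eq_self (μ := ν)
      (fun t : Torus => tpow t m * (tpow t n)⁻¹) g
    simp only [hmul, integral_neg] at key
    linear_combination (-(1:ℂ)/2) * key

end VMaux

open VMaux Complex LSeries
open scoped LSeries.notation

/-- The pointwise identity: the quotient of the two series, times `(tpow t n)⁻¹`, equals the
termwise series of the von Mangoldt function. -/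
lemma key_pointwise (β : ℝ) (hβ : 1 < β) (t : Torus) (n : ℕ) (hn : n ≠ 0) :
    (∑' m : ℕ,
        Complex.ofReal (((m : ℝ) + 1) ^ (-β) * Real.log ((m : ℝ) + 1)) * tpow t (m + 1)) /
      (∑' m : ℕ, Complex.ofReal (((m : ℝ) + 1) ^ (-β)) * tpow t (m + 1)) * (tpow t n)⁻¹
    = ∑' m : ℕ, LSeries.term (fun k => ((ArithmeticFunction.vonMangoldt k : ℝ) : ℂ)) (β : ℂ) m
        * (tpow t m * (tpow t n)⁻¹) := by
  have hs : 1 < (β : ℂ).re := by simpa using hβ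
  set fΛ : ℕ → ℂ := fun m => ((ArithmeticFunction.vonMangoldt m : ℝ) : ℂ) * tpow t m with hfΛ
  set f1 : ℕ → ℂ := fun m => tpow t m with hf1
  set fμ : ℕ → ℂ := fun m => ((ArithmeticFunction.moebius m : ℤ) : ℂ) * tpow t m with hfμ
  set flog : ℕ → ℂ := fun m => ((Real.log m : ℝ) : ℂ) * tpow t m with hflog
  -- summabilities
  have norm_summ : ∀ {f g : ℕ → ℂ}, LSeriesSummable g (β : ℂ) →
      (∀ m, ‖f m‖ = ‖g m‖) → LSeriesSummable f (β : ℂ) := by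
    intro f g hg h
    refine Summable.of_norm (hg.norm.congr fun m => ?_)
    rw [LSeries.norm_term_eq, LSeries.norm_term_eq, h]
  have hΛbase : LSeriesSummable (fun k => ((ArithmeticFunction.vonMangoldt k : ℝ) : ℂ)) (β : ℂ) :=
    ArithmeticFunction.LSeriesSummable_vonMangoldt hs
  have hΛs : LSeriesSummable fΛ (β : ℂ) :=
    norm_summ hΛbase fun m => by
      show ‖((ArithmeticFunction.vonMangoldt m : ℝ) : ℂ) * tpow t m‖ = _
      rw [norm_mul, norm_tpow, mul_one]
  have h1s : LSeriesSummable f1 (β : ℂ) :=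
    norm_summ (LSeriesSummable_one_iff.mpr hs) fun m => by
      show ‖tpow t m‖ = ‖(1 : ℕ → ℂ) m‖
      rw [norm_tpow, Pi.one_apply, norm_one]
  have hμs : LSeriesSummable fμ (β : ℂ) :=
    norm_summ (ArithmeticFunction.LSeriesSummable_moebius_iff.mpr hs) fun m => by
      show ‖((ArithmeticFunction.moebius m : ℤ) : ℂ) * tpow t m‖ = _
      rw [norm_mul, norm_tpow, mul_one]
  -- first convolution identity : fΛ ⍟ f1 = flog away from 0
  have hconv1 : ∀ {k : ℕ}, k ≠ 0 → (fΛ ⍟ f1) k = flog k := by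
    intro k hk
    have hc : (fΛ ⍟ f1) k = ∑ p ∈ k.divisorsAntidiagonal, fΛ p.1 * f1 p.2 := by
      rw [LSeries.convolution_def]
    rw [hc]
    have hterm : ∀ p ∈ k.divisorsAntidiagonal,
        fΛ p.1 * f1 p.2 = ((ArithmeticFunction.vonMangoldt p.1 : ℝ) : ℂ) * tpow t k := by
      intro p hp
      obtain ⟨hpk, hk0⟩ := Nat.mem_divisorsAntidiagonal.mp hp
      have h1 : p.1 ≠ 0 := fun h => hk0 (by rw [← hpk, h, zero_mul])
      have h2 : p.2 ≠ 0 := fun h => hk0 (by rw [← hpk, h, mul_zero])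
      rw [hfΛ, hf1]
      dsimp only
      rw [mul_assoc, ← tpow_mul t h1 h2, hpk]
    rw [Finset.sum_congr rfl hterm, ← Finset.sum_mul]
    rw [hflog]
    dsimp only
    congr 1
    rw [Nat.sum_divisorsAntidiagonal (fun i _ => ((ArithmeticFunction.vonMangoldt i : ℝ) : ℂ))]
    rw [show ∑ i ∈ k.divisors, ((ArithmeticFunction.vonMangoldt i : ℝ) : ℂ) =
      ((∑ i ∈ k.divisors, ArithmeticFunction.vonMangoldt i : ℝ) : ℂ) by push_cast; rfl]
    rw [ArithmeticFunction.vonMangoldt_sum]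
  -- second convolution identity : f1 ⍟ fμ = δ away from 0
  have hconv2 : ∀ {k : ℕ}, k ≠ 0 → (f1 ⍟ fμ) k = LSeries.delta k := by
    intro k hk
    have hc : (f1 ⍟ fμ) k = ∑ p ∈ k.divisorsAntidiagonal, f1 p.1 * fμ p.2 := by
      rw [LSeries.convolution_def]
    rw [hc]
    have hterm : ∀ p ∈ k.divisorsAntidiagonal,
        f1 p.1 * fμ p.2 = ((ArithmeticFunction.moebius p.2 : ℤ) : ℂ) * tpow t k := by
      intro p hp
      obtain ⟨hpk, hk0⟩ := Nat.mem_divisorsAntidiagonal.mp hp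
      have h1 : p.1 ≠ 0 := fun h => hk0 (by rw [← hpk, h, zero_mul])
      have h2 : p.2 ≠ 0 := fun h => hk0 (by rw [← hpk, h, mul_zero])
      rw [hf1, hfμ]
      dsimp only
      rw [show tpow t p.1 * (((ArithmeticFunction.moebius p.2 : ℤ) : ℂ) * tpow t p.2) =
        ((ArithmeticFunction.moebius p.2 : ℤ) : ℂ) * (tpow t p.1 * tpow t p.2) by ring,
        ← tpow_mul t h1 h2, hpk]
    rw [Finset.sum_congr rfl hterm, ← Finset.sum_mul]
    rw [Nat.sum_divisorsAntidiagonal' (fun _ i => ((ArithmeticFunction.moebius i : ℤ) : ℂ))]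
    have hmu : ∑ i ∈ k.divisors, (ArithmeticFunction.moebius i : ℤ) =
        (1 : ArithmeticFunction ℤ) k := by
      rw [← ArithmeticFunction.moebius_mul_coe_zeta]
      rw [ArithmeticFunction.coe_mul_zeta_apply]
    have : ∑ i ∈ k.divisors, ((ArithmeticFunction.moebius i : ℤ) : ℂ) =
        (((1 : ArithmeticFunction ℤ) k : ℤ) : ℂ) := by
      rw [← hmu]; push_cast; rfl
    rw [this, ArithmeticFunction.one_apply, LSeries.delta]
    rcases eq_or_ne k 1 with rfl | hk1
    · simp [tpow_one]
    · simp [hk1]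
  -- nonvanishing of the denominator
  have hdelta : LSeries LSeries.delta (β : ℂ) = 1 := by
    rw [LSeries_delta]; rfl
  have hG0 : LSeries f1 (β : ℂ) ≠ 0 := by
    intro h
    have h2 : LSeries (f1 ⍟ fμ) (β : ℂ) = LSeries f1 (β : ℂ) * LSeries fμ (β : ℂ) :=
      LSeries_convolution' h1s hμs
    rw [LSeries_congr hconv2 (β : ℂ), hdelta, h, zero_mul] at h2
    exact one_ne_zero h2
  -- quotient identity
  have hFG : LSeries flog (β : ℂ) / LSeries f1 (β : ℂ) = LSeries fΛ (β : ℂ) := by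
    rw [← LSeries_congr hconv1 (β : ℂ), LSeries_convolution' hΛs h1s,
      mul_div_cancel_right₀ _ hG0]
  -- identify the two series in the statement with L-series
  have hcast : ∀ m : ℕ, ((m + 1 : ℕ) : ℂ) ^ (β : ℂ) = Complex.ofReal (((m : ℝ) + 1) ^ β) := by
    intro m
    rw [Complex.ofReal_cpow (by positivity)]
    push_cast
    ring_nf
  have hGrepr : (∑' m : ℕ, Complex.ofReal (((m : ℝ) + 1) ^ (-β)) * tpow t (m + 1)) =
      LSeries f1 (β : ℂ) := by
    rw [LSeries, Summable.tsum_eq_zero_add h1s, LSeries.term_zero, zero_add]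
    refine tsum_congr fun m => ?_
    rw [LSeries.term_of_ne_zero (Nat.succ_ne_zero m)]
    rw [Real.rpow_neg (by positivity), Complex.ofReal_inv, hf1]
    dsimp only
    rw [div_eq_mul_inv, mul_comm, hcast]
  have hFrepr : (∑' m : ℕ,
      Complex.ofReal (((m : ℝ) + 1) ^ (-β) * Real.log ((m : ℝ) + 1)) * tpow t (m + 1)) =
      LSeries flog (β : ℂ) := by
    have hflogs : LSeriesSummable flog (β : ℂ) := by
      exact (LSeriesSummable_congr (β : ℂ) fun {k} hk => hconv1 hk).mp
        (hΛs.convolution h1s)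
    rw [LSeries, Summable.tsum_eq_zero_add hflogs, LSeries.term_zero, zero_add]
    refine tsum_congr fun m => ?_
    rw [LSeries.term_of_ne_zero (Nat.succ_ne_zero m), hflog]
    dsimp only
    rw [Real.rpow_neg (by positivity), Complex.ofReal_mul, Complex.ofReal_inv]
    rw [div_eq_mul_inv, hcast]
    have : ((((m : ℕ) + 1 : ℕ) : ℝ)) = ((m : ℝ) + 1) := by push_cast; ring
    rw [this]
    ring
  rw [hGrepr, hFrepr, hFG]
  -- expand the L-series of fΛ and distribute the inverse factor
  rw [LSeries, ← tsum_mul_right]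
  refine tsum_congr fun m => ?_
  rcases eq_or_ne m 0 with rfl | hm
  · simp [LSeries.term_zero]
  · rw [LSeries.term_of_ne_zero hm, LSeries.term_of_ne_zero hm, hfΛ]
    dsimp only
    ring

/-- For every real `β > 1` and every positive integer `n`, the von Mangoldt function satisfies
`Λ(n) = n^β ∫_{𝕋^ω} (∑_{m=1}^∞ m^{-β} (log m) t^{α(m)}) / (∑_{m=1}^∞ m^{-β} t^{α(m)}) · t^{-α(n)} dt`,
where `dt` is the normalized Haar measure on `𝕋^ω` and `t^{-α(n)} = (t^{α(n)})⁻¹`. -/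
theorem vonMangoldt_integral_repr (β : ℝ) (hβ : 1 < β) (n : ℕ) (hn : 1 ≤ n)
    (ν : Measure Torus) [ν.IsHaarMeasure] [IsProbabilityMeasure ν] :
    ((ArithmeticFunction.vonMangoldt n : ℝ) : ℂ) =
      Complex.ofReal ((n : ℝ) ^ β) *
        ∫ t : Torus,
          (∑' m : ℕ,
              Complex.ofReal (((m : ℝ) + 1) ^ (-β) * Real.log ((m : ℝ) + 1)) * tpow t (m + 1)) /
            (∑' m : ℕ, Complex.ofReal (((m : ℝ) + 1) ^ (-β)) * tpow t (m + 1))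
            * (tpow t n)⁻¹ ∂ν := by
  have hn0 : n ≠ 0 := by omega
  have hs : 1 < (β : ℂ).re := by simpa using hβ
  set u : ℕ → Torus → ℂ := fun m t =>
    LSeries.term (fun k => ((ArithmeticFunction.vonMangoldt k : ℝ) : ℂ)) (β : ℂ) m
      * (tpow t m * (tpow t n)⁻¹) with hu
  have hrw : (∫ t : Torus,
      (∑' m : ℕ,
          Complex.ofReal (((m : ℝ) + 1) ^ (-β) * Real.log ((m : ℝ) + 1)) * tpow t (m + 1)) /
        (∑' m : ℕ, Complex.ofReal (((m : ℝ) + 1) ^ (-β)) * tpow t (m + 1))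
        * (tpow t n)⁻¹ ∂ν) = ∫ t : Torus, ∑' m : ℕ, u m t ∂ν :=
    integral_congr_ae (Eventually.of_forall fun t => key_pointwise β hβ t n hn0)
  have hΛbase : LSeriesSummable (fun k => ((ArithmeticFunction.vonMangoldt k : ℝ) : ℂ)) (β : ℂ) :=
    ArithmeticFunction.LSeriesSummable_vonMangoldt hs
  have hmeas : ∀ m : ℕ, AEStronglyMeasurable (u m) ν := by
    intro m
    refine Continuous.aestronglyMeasurable ?_
    exact continuous_const.mul ((continuous_tpow m).mul
      ((continuous_tpow n).inv₀ fun t => tpow_ne_zero t n))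
  have hnorm : ∀ m : ℕ, ∀ t : Torus, ‖u m t‖ =
      ‖LSeries.term (fun k => ((ArithmeticFunction.vonMangoldt k : ℝ) : ℂ)) (β : ℂ) m‖ := by
    intro m t
    rw [hu]
    dsimp only
    rw [norm_mul, norm_mul, norm_inv, norm_tpow, norm_tpow]
    norm_num
  have hfin : (∑' m : ℕ, ∫⁻ t, ‖u m t‖₊ ∂ν) ≠ ⊤ := by
    have hconst : ∀ m : ℕ, (∫⁻ t, ‖u m t‖₊ ∂ν) =
        (‖LSeries.term (fun k => ((ArithmeticFunction.vonMangoldt k : ℝ) : ℂ)) (β : ℂ) m‖₊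
          : ENNReal) := by
      intro m
      have : ∀ t : Torus, (‖u m t‖₊ : ENNReal) =
          (‖LSeries.term (fun k => ((ArithmeticFunction.vonMangoldt k : ℝ) : ℂ)) (β : ℂ) m‖₊
            : ENNReal) := by
        intro t
        congr 1
        ext
        exact hnorm m t
      simp only [this]
      rw [lintegral_const, measure_univ, mul_one]
    simp only [hconst]
    rw [ENNReal.tsum_coe_ne_top_iff_summable]
    have := hΛbase.norm
    refine NNReal.summable_coe.mp (this.congr fun m => ?_)
    simp [coe_nnnorm]
  rw [hrw, integral_tsum hmeas hfin]
  have hint : ∀ m : ℕ, (∫ t, u m t ∂ν) =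
      LSeries.term (fun k => ((ArithmeticFunction.vonMangoldt k : ℝ) : ℂ)) (β : ℂ) m *
        ∫ t, tpow t m * (tpow t n)⁻¹ ∂ν := fun m => integral_const_mul _ _
  simp only [hint]
  have htsum : (∑' m : ℕ,
      LSeries.term (fun k => ((ArithmeticFunction.vonMangoldt k : ℝ) : ℂ)) (β : ℂ) m *
        ∫ t, tpow t m * (tpow t n)⁻¹ ∂ν) =
      LSeries.term (fun k => ((ArithmeticFunction.vonMangoldt k : ℝ) : ℂ)) (β : ℂ) n := by
    rw [tsum_eq_single n ?_]
    · rw [VMaux.integral_tpow ν hn0 hn0, if_pos rfl, mul_one]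
    · intro m hm
      rcases eq_or_ne m 0 with rfl | hm0
      · simp [LSeries.term_zero]
      · rw [VMaux.integral_tpow ν hm0 hn0, if_neg hm, mul_zero]
  rw [htsum, LSeries.term_of_ne_zero hn0]
  have hnpow : ((n : ℕ) : ℂ) ^ (β : ℂ) = Complex.ofReal ((n : ℝ) ^ β) := by
    rw [Complex.ofReal_cpow (by positivity)]
    norm_num
  rw [hnpow]
  have hne : Complex.ofReal ((n : ℝ) ^ β) ≠ 0 := by
    simp only [ne_eq, Complex.ofReal_eq_zero]
    positivity
  field_simp
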